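/- Let q ≥ 3, let d ≥ 1 with 2d ≤ s, and let C be a d-uniform hypergraph on {1,…,s} (every edge of C has exactly d elements) that contains the clutter of partite paths 𝔠_{d−1}(J_{d×2}). Then the minimum distance of the edge code of C is δ(C_C) = (q−2)^d (q−1)^{s−d}. -/

import Mathlib

open MvPolynomial

/-- The affine torus `T = (K*)^s`: points of `K^s` with all coordinates nonzero. -/
abbrev Torus (s : ℕ) (K : Type) [Zero K] := {P : Fin s → K // ∀ i, P i ≠ 0}

/-- The evaluation map `f ↦ (f(P))_{P ∈ T}` as a linear map. -/
noncomputable def evalTorus (s : ℕ) (K : Type) [Field K] :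
    MvPolynomial (Fin s) K →ₗ[K] (Torus s K → K) :=
  LinearMap.pi fun P => (aeval (P.1 : Fin s → K)).toLinearMap

/-- The edge code of a hypergraph with edge set `E` on vertex set `{1,…,s}`:
the image under evaluation of the span of the squarefree monomials `∏_{j ∈ e} t_j`. -/
noncomputable def edgeCode (s : ℕ) (K : Type) [Field K] (E : Set (Finset (Fin s))) :
    Submodule K (Torus s K → K) :=
  (Submodule.span K ((fun e : Finset (Fin s) => ∏ j ∈ e, X j) '' E)).map (evalTorus s K)

/-- Hamming weight of a word indexed by the torus. -/
noncomputable def wt {s : ℕ} {K : Type} [Field K] (c : Torus s K → K) : ℕ :=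
  {P | c P ≠ 0}.ncard

/-- Minimum distance of a linear code: the least Hamming weight of a nonzero codeword. -/
noncomputable def minDist {s : ℕ} {K : Type} [Field K] (C : Submodule K (Torus s K → K)) : ℕ :=
  sInf {w : ℕ | ∃ c ∈ C, c ≠ 0 ∧ wt c = w}

/-- A hypergraph with edge set `E` on `{1,…,s}` contains the clutter of partite paths
`𝔠_{m-1}(J_{m×2})`: there are `2m` distinct vertices `i_1,…,i_{2m}` such that for every
`σ : {1,…,m} → {0,1}`, the `m`-set `{i_{2r-1+σ(r)} : r = 1,…,m}` is an edge. -/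
def ContainsPartitePathClutter (s m : ℕ) (E : Finset (Finset (Fin s))) : Prop :=
  ∃ ι : Fin (2 * m) → Fin s, Function.Injective ι ∧
    ∀ σ : Fin m → Fin 2,
      (Finset.image
        (fun r : Fin m =>
          ι ⟨2 * (r : ℕ) + ((σ r : ℕ)),
            by have h1 := r.isLt; have h2 := (σ r).isLt; omega⟩)
        Finset.univ) ∈ E

lemma pow_anti_aux {a b : ℕ} (hab : a ≤ b) {i j N : ℕ} (hij : i ≤ j) (hjN : j ≤ N) :
    a ^ j * b ^ (N - j) ≤ a ^ i * b ^ (N - i) := by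
  obtain ⟨k, rfl⟩ := Nat.exists_eq_add_of_le hij
  have h1 : N - i = k + (N - (i + k)) := by omega
  rw [h1, pow_add, pow_add]
  calc a ^ i * a ^ k * b ^ (N - (i + k))
      ≤ a ^ i * b ^ k * b ^ (N - (i + k)) :=
        Nat.mul_le_mul_right _ (Nat.mul_le_mul_left _ (Nat.pow_le_pow_left hab k))
    _ = a ^ i * (b ^ k * b ^ (N - (i + k))) := by ring

lemma ncard_cons_split {K : Type} [Fintype K] {n : ℕ} (P : (Fin (n + 1) → K) → Prop) :
    {x : Fin (n + 1) → K | P x}.ncard = ∑ a : K, {y : Fin n → K | P (Fin.cons a y)}.ncard := by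
  classical
  rw [Set.ncard_eq_toFinset_card', Set.toFinset_setOf]
  rw [Finset.card_eq_sum_card_fiberwise (f := fun x : Fin (n + 1) → K => x 0)
    (t := Finset.univ) (fun x _ => Finset.mem_univ _)]
  apply Finset.sum_congr rfl
  intro a _
  rw [Set.ncard_eq_toFinset_card', Set.toFinset_setOf]
  refine Finset.card_bij' (fun x _ => Fin.tail x) (fun y _ => Fin.cons a y) ?_ ?_ ?_ ?_
  case refine_1 =>
    intro x hx
    simp only [Finset.mem_filter, Finset.mem_univ, true_and] at hx ⊢
    have hc := Fin.cons_self_tail x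
    rw [hx.2] at hc
    rw [show (Fin.cons a (Fin.tail x) : Fin (n+1) → K) = x from hc]
    exact hx.1
  case refine_2 =>
    intro y hy
    simp only [Finset.mem_filter, Finset.mem_univ, true_and] at hy ⊢
    exact ⟨hy, by simp⟩
  case refine_3 =>
    intro x hx
    simp only [Finset.mem_filter, Finset.mem_univ, true_and] at hx
    have hc := Fin.cons_self_tail x
    rw [hx.2] at hc
    exact hc
  case refine_4 =>
    intro y _
    simp

lemma ml_totalDegree_le {K : Type} [CommSemiring K] {n : ℕ} (p : MvPolynomial (Fin n) K)
    (hml : ∀ m ∈ p.support, ∀ i, m i ≤ 1) : p.totalDegree ≤ n := by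
  rw [totalDegree]
  apply Finset.sup_le
  intro m hm
  calc (m.sum fun _ e => e) = ∑ i ∈ m.support, m i := rfl
    _ ≤ ∑ _i ∈ m.support, 1 := Finset.sum_le_sum fun i _ => hml m hm i
    _ = m.support.card := by simp
    _ ≤ n := by simpa using Finset.card_le_univ m.support

lemma key_count {K : Type} [Field K] [Fintype K] {q : ℕ} (hq : 3 ≤ q) (hK : Fintype.card K = q) :
    ∀ (n : ℕ) (d : ℕ) (f : MvPolynomial (Fin n) K),
      (∀ m ∈ f.support, ∀ i, m i ≤ 1) → f.totalDegree ≤ d → d ≤ n → f ≠ 0 →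
      (q - 2) ^ d * (q - 1) ^ (n - d) ≤ {x : Fin n → K | (∀ i, x i ≠ 0) ∧ eval x f ≠ 0}.ncard := by
  intro n
  induction n with
  | zero =>
    intro d f hml hdeg hdn hf0
    interval_cases d
    have hc : f.coeff 0 ≠ 0 := by
      intro hc
      apply hf0
      rw [eq_C_of_isEmpty f, hc, map_zero]
    have hset : {x : Fin 0 → K | (∀ i, x i ≠ 0) ∧ eval x f ≠ 0} = Set.univ := by
      ext x
      simp only [Set.mem_setOf_eq, Set.mem_univ, iff_true]
      refine ⟨fun i => i.elim0, ?_⟩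
      rw [eq_C_of_isEmpty f]
      simpa using hc
    rw [hset, Set.ncard_univ]
    simp [Nat.card_eq_fintype_card]
  | succ n ih =>
    intro d f hml hdeg hdn hf0
    classical
    have hab : q - 2 ≤ q - 1 := by omega
    set Pq := finSuccEquiv K n f with hPq
    set g := Pq.coeff 1 with hg
    set h := Pq.coeff 0 with hh
    have hdeg0f : degreeOf 0 f ≤ 1 := degreeOf_le_iff.2 fun m hm => hml m hm 0
    have hnatdeg : Pq.natDegree ≤ 1 := by rw [hPq, natDegree_finSuccEquiv]; exact hdeg0f
    have hml_coeff : ∀ i : ℕ, ∀ m ∈ (Pq.coeff i).support, ∀ j, m j ≤ 1 := by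
      intro i m hm j
      have := hml (Finsupp.cons i m) (mem_support_coeff_finSuccEquiv.mp hm) j.succ
      rwa [Finsupp.cons_succ] at this
    have hcoeffdeg : ∀ i, (Pq.coeff i).totalDegree ≤ d := by
      intro i
      by_cases hc : Pq.coeff i = 0
      · rw [hc]; simp
      · exact le_trans (le_trans (Nat.le_add_right _ i)
          (totalDegree_coeff_finSuccEquiv_add_le f i hc)) hdeg
    have heval : ∀ (a : K) (y : Fin n → K),
        eval (Fin.cons a y) f = eval y h + a * eval y g := by
      intro a y
      rw [eval_eq_eval_mv_eval']
      have hQdeg : (Pq.map (eval y)).natDegree < 2 :=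
        lt_of_le_of_lt (le_trans Polynomial.natDegree_map_le hnatdeg) (by omega)
      rw [Polynomial.eval_eq_sum_range' hQdeg]
      simp only [Finset.sum_range_succ, Finset.sum_range_zero, Polynomial.coeff_map]
      ring
    set F : K → MvPolynomial (Fin n) K := fun a => h + C a * g with hF
    have hevalF : ∀ (a : K) (y : Fin n → K), eval y (F a) = eval y h + a * eval y g := by
      intro a y; simp [hF]
    have hmlF : ∀ a : K, ∀ m ∈ (F a).support, ∀ i, m i ≤ 1 := by
      intro a m hm i
      have hsub : (F a).support ⊆ h.support ∪ (C a * g).support := support_add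
      rcases Finset.mem_union.mp (hsub hm) with hmem | hmem
      · exact hml_coeff 0 m hmem i
      · rw [C_mul'] at hmem
        exact hml_coeff 1 m (MvPolynomial.support_smul hmem) i
    -- split the count
    rw [ncard_cons_split (fun x : Fin (n+1) → K => (∀ i, x i ≠ 0) ∧ eval x f ≠ 0)]
    have hterm : ∀ a : K, a ≠ 0 →
        {y : Fin n → K | (∀ i, (Fin.cons a y : Fin (n+1) → K) i ≠ 0) ∧ eval (Fin.cons a y) f ≠ 0}
          = {y : Fin n → K | (∀ i, y i ≠ 0) ∧ eval y (F a) ≠ 0} := by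
      intro a ha
      ext y
      simp only [Set.mem_setOf_eq, heval a y, ← hevalF a y]
      constructor
      · rintro ⟨h1, h2⟩
        exact ⟨fun i => by simpa using h1 i.succ, h2⟩
      · rintro ⟨h1, h2⟩
        refine ⟨fun i => ?_, h2⟩
        refine Fin.cases ?_ ?_ i
        · simpa using ha
        · intro j; simpa using h1 j
    have hzero : {y : Fin n → K | (∀ i, (Fin.cons (0:K) y : Fin (n+1) → K) i ≠ 0) ∧
        eval (Fin.cons (0:K) y) f ≠ 0}.ncard = 0 := by
      have : {y : Fin n → K | (∀ i, (Fin.cons (0:K) y : Fin (n+1) → K) i ≠ 0) ∧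
          eval (Fin.cons (0:K) y) f ≠ 0} = ∅ := by
        ext y
        simp only [Set.mem_setOf_eq, Set.mem_empty_iff_false, iff_false, not_and]
        intro hy
        exact absurd (hy 0) (by simp)
      rw [this, Set.ncard_empty]
    have hsum_erase : ∑ a : K,
        {y : Fin n → K | (∀ i, (Fin.cons a y : Fin (n+1) → K) i ≠ 0) ∧ eval (Fin.cons a y) f ≠ 0}.ncard
        = ∑ a ∈ Finset.univ.erase 0,
            {y : Fin n → K | (∀ i, y i ≠ 0) ∧ eval y (F a) ≠ 0}.ncard := by
      rw [← Finset.sum_erase (f := fun a : K =>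
        {y : Fin n → K | (∀ i, (Fin.cons a y : Fin (n+1) → K) i ≠ 0) ∧
          eval (Fin.cons a y) f ≠ 0}.ncard) Finset.univ hzero]
      exact Finset.sum_congr rfl fun a ha => by
        rw [hterm a (Finset.mem_erase.mp ha).1]
    rw [hsum_erase]
    clear hsum_erase hzero hterm
    by_cases hex : ∃ a : K, a ≠ 0 ∧ F a = 0
    · -- f = (x_0 - a0) * g  on the torus
      obtain ⟨a0, ha0, hFa0⟩ := hex
      have hg0 : g ≠ 0 := by
        intro hgz
        apply hf0
        have hh0 : h = 0 := by
          have := hFa0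
          rw [hF] at this
          simp only [hgz, mul_zero, add_zero] at this
          exact this
        have hPq0 : Pq = 0 := by
          apply Polynomial.ext
          intro i
          match i with
          | 0 => simpa using hh0
          | 1 => simpa using hgz
          | (i+2) =>
            simpa using Polynomial.coeff_eq_zero_of_natDegree_lt (by omega : Pq.natDegree < i + 2)
        apply (finSuccEquiv K n).injective
        rw [map_zero]
        exact hPq0
      have hgdeg1 : g.totalDegree + 1 ≤ d :=
        le_trans (totalDegree_coeff_finSuccEquiv_add_le f 1 hg0) hdeg
      have hd1 : 1 ≤ d := by omega
      set d'' := min (d - 1) n with hd''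
      have hgdeg2 : g.totalDegree ≤ d'' :=
        le_min (by omega) (ml_totalDegree_le g (hml_coeff 1))
      have hbound : ∀ a ∈ (Finset.univ.erase 0).erase a0,
          (q - 2) ^ d'' * (q - 1) ^ (n - d'') ≤
            {y : Fin n → K | (∀ i, y i ≠ 0) ∧ eval y (F a) ≠ 0}.ncard := by
        intro a ha
        obtain ⟨haa0, ha'⟩ := Finset.mem_erase.mp ha
        have ha0' : a ≠ 0 := (Finset.mem_erase.mp ha').1
        have hFa : ∀ y : Fin n → K, eval y (F a) = (a - a0) * eval y g := by
          intro y
          have h1 : eval y h + a0 * eval y g = 0 := by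
            rw [← hevalF a0 y, hFa0, map_zero]
          have h2 := hevalF a y
          linear_combination h2 + h1
        have hseteq : {y : Fin n → K | (∀ i, y i ≠ 0) ∧ eval y (F a) ≠ 0}
            = {y : Fin n → K | (∀ i, y i ≠ 0) ∧ eval y g ≠ 0} := by
          ext y
          simp only [Set.mem_setOf_eq, hFa y, mul_ne_zero_iff, sub_ne_zero,
            and_congr_right_iff]
          intro _
          simp [haa0]
        rw [hseteq]
        exact ih d'' g (hml_coeff 1) hgdeg2 (min_le_right _ _) hg0
      have hcard : ((Finset.univ.erase 0).erase a0).card = q - 2 := by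
        rw [Finset.card_erase_of_mem (Finset.mem_erase.mpr ⟨ha0, Finset.mem_univ a0⟩),
          Finset.card_erase_of_mem (Finset.mem_univ 0), Finset.card_univ, hK]
        omega
      calc (q - 2) ^ d * (q - 1) ^ (n + 1 - d)
          ≤ (q - 2) ^ (d'' + 1) * (q - 1) ^ ((n + 1) - (d'' + 1)) :=
            pow_anti_aux hab (by omega) (by omega)
        _ = (q - 2) * ((q - 2) ^ d'' * (q - 1) ^ (n - d'')) := by
            rw [pow_succ, show (n + 1) - (d'' + 1) = n - d'' from by omega]; ring
        _ = ((Finset.univ.erase 0).erase a0).card •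
              ((q - 2) ^ d'' * (q - 1) ^ (n - d'')) := by rw [hcard, smul_eq_mul]
        _ ≤ ∑ a ∈ (Finset.univ.erase 0).erase a0,
              {y : Fin n → K | (∀ i, y i ≠ 0) ∧ eval y (F a) ≠ 0}.ncard :=
            Finset.card_nsmul_le_sum _ _ _ hbound
        _ ≤ ∑ a ∈ Finset.univ.erase 0,
              {y : Fin n → K | (∀ i, y i ≠ 0) ∧ eval y (F a) ≠ 0}.ncard :=
            Finset.sum_le_sum_of_subset (Finset.erase_subset _ _)
    · push_neg at hex
      set d' := min d n with hd'
      have hFdeg : ∀ a : K, (F a).totalDegree ≤ d' := by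
        intro a
        refine le_min (le_trans (totalDegree_add _ _) (max_le (hcoeffdeg 0) ?_))
          (ml_totalDegree_le _ (hmlF a))
        rw [C_mul']
        exact le_trans (totalDegree_smul_le _ _) (hcoeffdeg 1)
      have hbound : ∀ a ∈ Finset.univ.erase (0 : K),
          (q - 2) ^ d' * (q - 1) ^ (n - d') ≤
            {y : Fin n → K | (∀ i, y i ≠ 0) ∧ eval y (F a) ≠ 0}.ncard := by
        intro a ha
        exact ih d' (F a) (hmlF a) (hFdeg a) (min_le_right _ _)
          (hex a (Finset.mem_erase.mp ha).1)
      have hcard : (Finset.univ.erase (0 : K)).card = q - 1 := by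
        rw [Finset.card_erase_of_mem (Finset.mem_univ 0), Finset.card_univ, hK]
      calc (q - 2) ^ d * (q - 1) ^ (n + 1 - d)
          ≤ (q - 2) ^ d' * (q - 1) ^ ((n + 1) - d') :=
            pow_anti_aux hab (min_le_left _ _) hdn
        _ = (q - 1) * ((q - 2) ^ d' * (q - 1) ^ (n - d')) := by
            rw [show (n + 1) - d' = (n - d') + 1 from by omega, pow_succ]; ring
        _ = (Finset.univ.erase (0 : K)).card •
              ((q - 2) ^ d' * (q - 1) ^ (n - d')) := by rw [hcard, smul_eq_mul]
        _ ≤ ∑ a ∈ Finset.univ.erase 0,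
              {y : Fin n → K | (∀ i, y i ≠ 0) ∧ eval y (F a) ≠ 0}.ncard :=
            Finset.card_nsmul_le_sum _ _ _ hbound

lemma prodX_eq_monomial {s : ℕ} {K : Type} [CommSemiring K] (e : Finset (Fin s)) :
    (∏ j ∈ e, X j : MvPolynomial (Fin s) K)
      = monomial (∑ j ∈ e, Finsupp.single j 1) 1 := by
  classical
  induction e using Finset.induction with
  | empty => simp
  | insert _ _ hj ih =>
    rw [Finset.prod_insert hj, Finset.sum_insert hj, ih,
      show (X _ : MvPolynomial (Fin s) K) = _ ^ 1 from (pow_one _).symm,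
      X_pow_eq_monomial, monomial_mul, one_mul]

lemma span_ml {s d : ℕ} {K : Type} [Field K] (E : Finset (Finset (Fin s)))
    (huniform : ∀ e ∈ E, e.card = d) (f : MvPolynomial (Fin s) K)
    (hf : f ∈ Submodule.span K
      ((fun e : Finset (Fin s) => ∏ j ∈ e, X j) '' (E : Set (Finset (Fin s))))) :
    (∀ m ∈ f.support, ∀ i, m i ≤ 1) ∧ f.totalDegree ≤ d := by
  classical
  refine Submodule.span_induction ?_ ?_ ?_ ?_ hf
  · rintro x ⟨e, he, rfl⟩
    show (∀ m ∈ (∏ j ∈ e, X j : MvPolynomial (Fin s) K).support, ∀ i, m i ≤ 1) ∧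
      (∏ j ∈ e, X j : MvPolynomial (Fin s) K).totalDegree ≤ d
    constructor
    · intro m hm i
      rw [prodX_eq_monomial] at hm
      rcases Finset.mem_singleton.mp (Finset.mem_of_subset (support_monomial_subset) hm) with rfl
      rw [Finsupp.finset_sum_apply]
      calc (∑ j ∈ e, Finsupp.single j 1 i) = ∑ j ∈ e, if j = i then 1 else 0 :=
            Finset.sum_congr rfl fun j _ => Finsupp.single_apply
        _ = if i ∈ e then 1 else 0 := Finset.sum_ite_eq' e i (fun _ => 1)
        _ ≤ 1 := by split <;> omega
    · calc (∏ j ∈ e, X j : MvPolynomial (Fin s) K).totalDegree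
          ≤ ∑ j ∈ e, (X j : MvPolynomial (Fin s) K).totalDegree :=
            totalDegree_finset_prod e _
        _ = ∑ _j ∈ e, 1 := Finset.sum_congr rfl fun j _ => totalDegree_X j
        _ = e.card := by simp
        _ ≤ d := le_of_eq (huniform e he)
  · simp
  · rintro x y _ _ ⟨hx1, hx2⟩ ⟨hy1, hy2⟩
    refine ⟨fun m hm i => ?_, le_trans (totalDegree_add x y) (max_le hx2 hy2)⟩
    rcases Finset.mem_union.mp (MvPolynomial.support_add hm) with hm | hm
    · exact hx1 m hm i
    · exact hy1 m hm i
  · rintro a x _ ⟨hx1, hx2⟩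
    refine ⟨fun m hm i => hx1 m (MvPolynomial.support_smul hm) i,
      le_trans (totalDegree_smul_le a x) hx2⟩

lemma evalTorus_apply {s : ℕ} {K : Type} [Field K] (f : MvPolynomial (Fin s) K)
    (P : Torus s K) : evalTorus s K f P = eval P.1 f := by
  simp [evalTorus, aeval_def]

lemma wt_evalTorus {s : ℕ} {K : Type} [Field K] [Fintype K] (f : MvPolynomial (Fin s) K) :
    wt (evalTorus s K f) = {x : Fin s → K | (∀ i, x i ≠ 0) ∧ eval x f ≠ 0}.ncard := by
  rw [wt]
  have himg : {x : Fin s → K | (∀ i, x i ≠ 0) ∧ eval x f ≠ 0}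
      = Subtype.val '' {P : Torus s K | evalTorus s K f P ≠ 0} := by
    ext x
    constructor
    · rintro ⟨h1, h2⟩
      exact ⟨⟨x, h1⟩, by simpa [evalTorus_apply] using h2, rfl⟩
    · rintro ⟨P, hP, rfl⟩
      exact ⟨P.2, by simpa [evalTorus_apply] using hP⟩
  rw [himg, Set.ncard_image_of_injective _ Subtype.val_injective]

/-- auxiliary index function -/
def pidx {d : ℕ} (r : Fin d) (k : Fin 2) : Fin (2 * d) :=
  ⟨2 * r.1 + k.1, by have := r.isLt; have := k.isLt; omega⟩


/-- for `q ≥ 3`, a `d`-uniform hypergraph `C` on `{1,…,s}` with `d ≤ s/2`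
which contains the clutter of partite paths `𝔠_{d-1}(J_{d×2})` has edge code of minimum
distance `(q-2)^d (q-1)^{s-d}`. -/
theorem minDist_edgeCode_uniform_clutter_low_degree
    (q s d : ℕ) (hq : 3 ≤ q) (hd : 1 ≤ d) (hds : 2 * d ≤ s)
    (K : Type) [Field K] [Fintype K] (hK : Fintype.card K = q)
    (E : Finset (Finset (Fin s)))
    (huniform : ∀ e ∈ E, e.card = d)
    (hclutter : ContainsPartitePathClutter s d E) :
    minDist (edgeCode s K (E : Set (Finset (Fin s)))) = (q - 2) ^ d * (q - 1) ^ (s - d) := by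
  classical
  obtain ⟨ι, hι, hedge⟩ := hclutter
  set f0 : MvPolynomial (Fin s) K :=
    ∏ r : Fin d, (X (ι (pidx r 0)) - X (ι (pidx r 1))) with hf0def
  -- span membership
  have hspan : f0 ∈ Submodule.span K
      ((fun e : Finset (Fin s) => ∏ j ∈ e, X j) '' (↑E : Set (Finset (Fin s)))) := by
    have hexp : f0 = ∑ t : Finset (Fin d),
        (∏ r ∈ t, X (ι (pidx r 0))) * ∏ r ∈ tᶜ, (-X (ι (pidx r 1))) := by
      rw [hf0def]
      simp_rw [sub_eq_add_neg]
      exact Fintype.prod_add _ _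
    rw [hexp]
    refine Submodule.sum_mem _ fun t _ => ?_
    have hinj2 : Function.Injective
        (fun r : Fin d => ι (pidx r (if r ∈ t then 0 else 1))) := by
      intro r r' hrr
      have hval := congrArg Fin.val (hι hrr)
      simp only [pidx] at hval
      have h1 : ((if r ∈ t then (0 : Fin 2) else 1) : Fin 2).1 < 2 := Fin.isLt _
      have h2 : ((if r' ∈ t then (0 : Fin 2) else 1) : Fin 2).1 < 2 := Fin.isLt _
      exact Fin.ext (by omega)
    have hedge_t := hedge (fun r => if r ∈ t then 0 else 1)
    have hprodim : (∏ j ∈ Finset.image (fun r : Fin d =>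
          ι (pidx r (if r ∈ t then 0 else 1))) Finset.univ, (X j : MvPolynomial (Fin s) K))
        = ∏ r : Fin d, X (ι (pidx r (if r ∈ t then 0 else 1))) :=
      Finset.prod_image (fun x _ y _ h => hinj2 h)
    have hsplit : (∏ r : Fin d,
          (X (ι (pidx r (if r ∈ t then 0 else 1))) : MvPolynomial (Fin s) K))
        = (∏ r ∈ t, X (ι (pidx r 0))) * ∏ r ∈ tᶜ, X (ι (pidx r 1)) := by
      rw [← Finset.prod_mul_prod_compl t]
      congr 1
      · exact Finset.prod_congr rfl fun r hr => by rw [if_pos hr]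
      · exact Finset.prod_congr rfl fun r hr => by rw [if_neg (Finset.mem_compl.mp hr)]
    have hneg : (∏ r ∈ tᶜ, (-X (ι (pidx r 1)) : MvPolynomial (Fin s) K))
        = C ((-1 : K) ^ tᶜ.card) * ∏ r ∈ tᶜ, X (ι (pidx r 1)) := by
      rw [map_pow, map_neg, map_one, ← Finset.prod_const, ← Finset.prod_mul_distrib]
      exact Finset.prod_congr rfl fun _ _ => (neg_one_mul _).symm
    have hterm : (∏ r ∈ t, (X (ι (pidx r 0)) : MvPolynomial (Fin s) K))
          * ∏ r ∈ tᶜ, (-X (ι (pidx r 1)))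
        = ((-1 : K) ^ tᶜ.card) • ∏ j ∈ Finset.image (fun r : Fin d =>
            ι (pidx r (if r ∈ t then 0 else 1))) Finset.univ, (X j : MvPolynomial (Fin s) K) := by
      rw [hneg, hprodim, hsplit, ← C_mul']
      ring
    rw [hterm]
    exact Submodule.smul_mem _ _
      (Submodule.subset_span ⟨_, Finset.mem_coe.mpr hedge_t, rfl⟩)
  set c0 := evalTorus s K f0 with hc0
  have hc0mem : c0 ∈ edgeCode s K (↑E : Set (Finset (Fin s))) :=
    Submodule.mem_map.mpr ⟨f0, hspan, rfl⟩
  -- pick v ∉ {0,1}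
  obtain ⟨v, hv⟩ : ∃ v : K, v ∉ ({0, 1} : Finset K) := by
    by_contra hcon
    push_neg at hcon
    have hsub : (Finset.univ : Finset K) ⊆ {0, 1} := fun x _ => hcon x
    have hle := Finset.card_le_card hsub
    rw [Finset.card_univ, hK] at hle
    have h01 : ({0, 1} : Finset K).card ≤ 2 :=
      le_trans (Finset.card_insert_le _ _) (by simp)
    omega
  have hv0 : v ≠ 0 := fun h => hv (by simp [h])
  have hv1 : v ≠ 1 := fun h => hv (by simp [h])
  set odd : Finset (Fin s) := Finset.image (fun r : Fin d => ι (pidx r 1)) Finset.univ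
    with hodd
  have hoddA : ∀ r : Fin d, ι (pidx r 0) ∉ odd := by
    intro r hmem
    rw [hodd] at hmem
    obtain ⟨r', _, hr'⟩ := Finset.mem_image.mp hmem
    have hval := congrArg Fin.val (hι hr')
    simp only [pidx] at hval
    omega
  have hoddB : ∀ r : Fin d, ι (pidx r 1) ∈ odd := fun r =>
    Finset.mem_image.mpr ⟨r, Finset.mem_univ r, rfl⟩
  have heval_f0 : ∀ x : Fin s → K,
      eval x f0 = ∏ r : Fin d, (x (ι (pidx r 0)) - x (ι (pidx r 1))) := by
    intro x
    rw [hf0def]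
    simp only [map_prod, map_sub, eval_X]
  have hc0ne : c0 ≠ 0 := by
    set P : Fin s → K := fun i => if i ∈ odd then v else 1 with hPdef
    have hP : ∀ i, P i ≠ 0 := by
      intro i
      by_cases hio : i ∈ odd <;> simp [hPdef, hio, hv0]
    have hPe : c0 ⟨P, hP⟩ ≠ 0 := by
      rw [hc0, evalTorus_apply, heval_f0]
      apply Finset.prod_ne_zero_iff.mpr
      intro r _
      have e1 : P (ι (pidx r 0)) = 1 := by simp [hPdef, hoddA r]
      have e2 : P (ι (pidx r 1)) = v := by simp [hPdef, hoddB r]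
      show P (ι (pidx r 0)) - P (ι (pidx r 1)) ≠ 0
      rw [e1, e2]
      exact sub_ne_zero.mpr (Ne.symm hv1)
    intro h0
    rw [h0] at hPe
    exact hPe rfl
  have hd_le_s : d ≤ s := by omega
  have hlower : ∀ c ∈ edgeCode s K (↑E : Set (Finset (Fin s))), c ≠ 0 →
      (q - 2) ^ d * (q - 1) ^ (s - d) ≤ wt c := by
    rintro c hc hcne
    obtain ⟨f, hf, rfl⟩ := Submodule.mem_map.mp hc
    obtain ⟨hml, hdeg⟩ := span_ml E huniform f hf
    have hfne : f ≠ 0 := by rintro rfl; exact hcne (map_zero _)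
    rw [wt_evalTorus]
    exact key_count hq hK s d f hml hdeg hd_le_s hfne
  -- upper bound via injection
  have hwt_le : wt c0 ≤ (q - 2) ^ d * (q - 1) ^ (s - d) := by
    rw [hc0, wt_evalTorus]
    set S : Set (Fin s → K) := {x : Fin s → K | (∀ i, x i ≠ 0) ∧ eval x f0 ≠ 0} with hS
    have hfac : ∀ x : ↥S, ∀ r : Fin d, x.1 (ι (pidx r 0)) - x.1 (ι (pidx r 1)) ≠ 0 := by
      intro x r
      have hx2 := x.2.2
      rw [heval_f0] at hx2
      exact Finset.prod_ne_zero_iff.mp hx2 r (Finset.mem_univ r)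
    set Φ : ↥S → (Fin d → {z : K // z ≠ 0 ∧ z ≠ 1}) ×
        ({i : Fin s // i ∉ odd} → {z : K // z ≠ 0}) :=
      fun x => (fun r => ⟨x.1 (ι (pidx r 1)) * (x.1 (ι (pidx r 0)))⁻¹,
          mul_ne_zero (x.2.1 _) (inv_ne_zero (x.2.1 _)),
          by
            intro h1
            have hB : x.1 (ι (pidx r 1)) = x.1 (ι (pidx r 0)) := by
              have h0 := x.2.1 (ι (pidx r 0))
              field_simp at h1
              exact h1
            exact hfac x r (by rw [hB]; ring)⟩,
        fun i => ⟨x.1 i.1, x.2.1 i.1⟩) with hΦdef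
    have hΦinj : Function.Injective Φ := by
      intro x y hxy
      have h1 := congrArg Prod.fst hxy
      have h2 := congrArg Prod.snd hxy
      apply Subtype.ext
      funext i
      by_cases hio : i ∈ odd
      · obtain ⟨r, _, rfl⟩ := Finset.mem_image.mp (hodd ▸ hio)
        have hA : x.1 (ι (pidx r 0)) = y.1 (ι (pidx r 0)) :=
          congrArg Subtype.val (congrFun h2 ⟨ι (pidx r 0), hoddA r⟩)
        have hR := congrArg Subtype.val (congrFun h1 r)
        simp only [hΦdef] at hR
        rw [← hA] at hR
        exact mul_right_cancel₀ (inv_ne_zero (x.2.1 (ι (pidx r 0)))) hR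
      · exact congrArg Subtype.val (congrFun h2 ⟨i, hio⟩)
    have hinjB : Function.Injective (fun r : Fin d => ι (pidx r 1)) := by
      intro r r' hrr
      have hval := congrArg Fin.val (hι hrr)
      simp only [pidx] at hval
      exact Fin.ext (by omega)
    have hoddcard : odd.card = d := by
      rw [hodd, Finset.card_image_of_injective _ hinjB, Finset.card_univ, Fintype.card_fin]
    have hcard1 : Fintype.card {z : K // z ≠ 0 ∧ z ≠ 1} = q - 2 := by
      rw [Fintype.card_subtype]
      have hfe : Finset.univ.filter (fun z : K => z ≠ 0 ∧ z ≠ 1) = ({0, 1} : Finset K)ᶜ := by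
        ext z
        simp [not_or]
      rw [hfe, Finset.card_compl,
        Finset.card_insert_of_notMem (by simp), Finset.card_singleton, hK]
    have hcard2 : Fintype.card {z : K // z ≠ 0} = q - 1 := by
      rw [Fintype.card_subtype]
      have hfe : Finset.univ.filter (fun z : K => z ≠ 0) = ({0} : Finset K)ᶜ := by
        ext z
        simp
      rw [hfe, Finset.card_compl, Finset.card_singleton, hK]
    have hcard3 : Fintype.card {i : Fin s // i ∉ odd} = s - d := by
      rw [Fintype.card_subtype]
      have hfe : Finset.univ.filter (fun i : Fin s => i ∉ odd) = oddᶜ := by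
        ext i
        simp
      rw [hfe, Finset.card_compl, hoddcard, Fintype.card_fin]
    calc S.ncard = Nat.card ↥S := (Nat.card_coe_set_eq S).symm
      _ ≤ Nat.card ((Fin d → {z : K // z ≠ 0 ∧ z ≠ 1}) ×
            ({i : Fin s // i ∉ odd} → {z : K // z ≠ 0})) :=
          Nat.card_le_card_of_injective Φ hΦinj
      _ = (q - 2) ^ d * (q - 1) ^ (s - d) := by
          rw [Nat.card_eq_fintype_card, Fintype.card_prod, Fintype.card_fun, Fintype.card_fun,
            hcard1, hcard2, hcard3, Fintype.card_fin]
  have hwt0 : wt c0 = (q - 2) ^ d * (q - 1) ^ (s - d) :=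
    le_antisymm hwt_le (hlower c0 hc0mem hc0ne)
  rw [minDist]
  refine le_antisymm ?_ ?_
  · exact hwt0 ▸ Nat.sInf_le ⟨c0, hc0mem, hc0ne, rfl⟩
  · refine le_csInf ⟨wt c0, c0, hc0mem, hc0ne, rfl⟩ ?_
    rintro w ⟨c, hc, hcne, rfl⟩
    exact hwt0 ▸ hwt0 ▸ hlower c hc hcne
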